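/- arXiv:0712.2688 — 3 statements merged into one kernel-verified Lean document; each statement's English description precedes it below -/
import Mathlib

section
/- Let G be a finite simple graph whose vertex set is partitioned into a set K inducing a clique, with K nonempty, and a set S inducing an independent set (i.e., G is a split graph). Then box(G) ≤ min{⌈|K|/2⌉, ⌈|S|/2⌉}. -/
/-- A `k`-box representation of `G`: assignments of axis-parallel boxes
(given by lower and upper corners) to vertices so that distinct vertices are
adjacent iff all their coordinate intervals intersect. -/
def HasBoxRep {V : Type*} (G : SimpleGraph V) (k : ℕ) : Prop :=
  ∃ a b : V → Fin k → ℝ,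
    (∀ v i, a v i ≤ b v i) ∧
    ∀ u v : V, u ≠ v →
      (G.Adj u v ↔ ∀ i : Fin k, (Set.Icc (a u i) (b u i) ∩ Set.Icc (a v i) (b v i)).Nonempty)

/-- The boxicity of `G`: the least `k` such that `G` has a `k`-box representation. -/
noncomputable def boxicity {V : Type*} (G : SimpleGraph V) : ℕ :=
  sInf {k : ℕ | HasBoxRep G k}

lemma rep_S {V : Type*} [Fintype V] [DecidableEq V] (G : SimpleGraph V)
    (K S : Finset V) (hunion : K ∪ S = Finset.univ)
    (hK : G.IsClique ↑K) (hS : ∀ u ∈ S, ∀ v ∈ S, ¬ G.Adj u v) :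
    HasBoxRep G ((S.card + 1) / 2) := by
  classical
  have hmemK : ∀ v : V, v ∉ S → v ∈ K := by
    intro v hv
    have : v ∈ K ∪ S := hunion ▸ Finset.mem_univ v
    simpa [Finset.mem_union, hv] using this
  set c := S.card with hc
  set e : ↥S ≃ Fin c := Fintype.equivFinOfCardEq (Fintype.card_coe S) with he
  set f : Fin c → V := fun j => ((e.symm j : ↥S) : V) with hf
  have hfS : ∀ j, f j ∈ S := fun j => (e.symm j).2
  have hfinj : Function.Injective f := fun j1 j2 h =>
    e.symm.injective (Subtype.ext h)
  have hidx : ∀ v (hv : v ∈ S), f (e ⟨v, hv⟩) = v := by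
    intro v hv; simp [hf]
  set k := (c + 1) / 2 with hk
  have h2i : ∀ i : Fin k, 2 * (i : ℕ) < c := by
    intro i; have := i.2; omega
  set σ : Fin k → V := fun i => f ⟨2 * i, h2i i⟩ with hσ
  set τ : Fin k → V := fun i =>
    if h : 2 * (i : ℕ) + 1 < c then f ⟨2 * i + 1, h⟩ else σ i with hτ
  -- every S vertex has a coordinate where it is extreme
  have key : ∀ v, v ∈ S → ∃ i : Fin k, v = σ i ∨ (v = τ i ∧ v ≠ σ i) := by
    intro v hv
    set j : ℕ := (e ⟨v, hv⟩ : ℕ) with hj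
    have hjc : j < c := (e ⟨v, hv⟩).2
    refine ⟨⟨j / 2, by omega⟩, ?_⟩
    set iF : Fin k := ⟨j / 2, by omega⟩ with hiF
    have hσval : σ iF = f ⟨2 * (j / 2), h2i iF⟩ := rfl
    by_cases hpar : 2 * (j / 2) = j
    · left
      rw [hσval, ← hidx v hv]
      exact (congrArg f (Fin.ext (by simpa using hpar))).symm
    · right
      have hodd : 2 * (j / 2) + 1 = j := by omega
      have hlt : 2 * (j / 2) + 1 < c := by omega
      have hτval : τ iF = f ⟨2 * (j / 2) + 1, hlt⟩ := by
        simp only [hτ]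
        rw [dif_pos (show 2 * (iF : ℕ) + 1 < c from hlt)]
      constructor
      · rw [hτval, ← hidx v hv]
        exact (congrArg f (Fin.ext (by simpa using hodd))).symm
      · intro hvs
        rw [hσval, ← hidx v hv] at hvs
        have := hfinj hvs
        have : j = 2 * (j / 2) := by simpa [Fin.ext_iff] using this
        omega
  set pt : V → Fin k → ℝ := fun v i => if v = σ i then -2 else if v = τ i then 2 else 0
    with hpt
  set A : V → Fin k → ℝ := fun v i =>
    if v ∈ S then pt v i else if G.Adj v (σ i) then -2 else 0 with hA
  set B : V → Fin k → ℝ := fun v i =>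
    if v ∈ S then pt v i else if G.Adj v (τ i) then 2 else 0 with hB
  have hAle0 : ∀ v i, v ∉ S → A v i ≤ 0 ∧ 0 ≤ B v i ∧ -2 ≤ A v i ∧ B v i ≤ 2 := by
    intro v i hv
    simp only [hA, hB, if_neg hv]
    constructor
    · split_ifs <;> norm_num
    constructor
    · split_ifs <;> norm_num
    constructor
    · split_ifs <;> norm_num
    · split_ifs <;> norm_num
  refine ⟨A, B, ?_, ?_⟩
  · intro v i
    by_cases hv : v ∈ S
    · simp [hA, hB, hv]
    · obtain ⟨h1, h2, _, _⟩ := hAle0 v i hv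
      linarith
  intro u v huv
  -- main: u ∉ S, v ∈ S
  have main : ∀ u v : V, u ∉ S → v ∈ S → u ≠ v →
      (G.Adj u v ↔ ∀ i : Fin k,
        (Set.Icc (A u i) (B u i) ∩ Set.Icc (A v i) (B v i)).Nonempty) := by
    intro u v hu hv huv
    constructor
    · intro hadj i
      refine ⟨pt v i, ?_, ?_⟩
      · obtain ⟨h1, h2, h3, h4⟩ := hAle0 u i hu
        simp only [Set.mem_Icc]
        by_cases h5 : v = σ i
        · have hu2 : A u i = -2 := by
            simp only [hA, if_neg hu, if_pos (h5 ▸ hadj)]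
          simp only [hpt, if_pos h5]
          exact ⟨hu2.le, by linarith⟩
        · by_cases h6 : v = τ i
          · have hu2 : B u i = 2 := by
              simp only [hB, if_neg hu, if_pos (h6 ▸ hadj)]
            simp only [hpt, if_neg h5, if_pos h6]
            exact ⟨by linarith, hu2.ge⟩
          · simp only [hpt, if_neg h5, if_neg h6]
            exact ⟨h1, h2⟩
      · simp only [hA, hB, if_pos hv, Set.mem_Icc]
        exact ⟨le_refl _, le_refl _⟩
    · intro hall
      by_contra hnadj
      obtain ⟨i, hi⟩ := key v hv
      obtain ⟨x, hx1, hx2⟩ := hall i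
      simp only [hA, hB, if_pos hv, Set.mem_Icc] at hx2
      have hxpt : x = pt v i := le_antisymm hx2.2 hx2.1
      simp only [hA, hB, if_neg hu, Set.mem_Icc] at hx1
      rcases hi with h5 | ⟨h6, h5⟩
      · have : pt v i = -2 := by simp [hpt, h5]
        have hu2 : (if G.Adj u (σ i) then (-2 : ℝ) else 0) = 0 := by
          rw [if_neg]; rw [← h5]; exact hnadj
        rw [hu2] at hx1
        rw [hxpt, this] at hx1
        linarith [hx1.1]
      · have : pt v i = 2 := by simp only [hpt]; rw [if_neg h5, if_pos h6]
        have hu2 : (if G.Adj u (τ i) then (2 : ℝ) else 0) = 0 := by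
          rw [if_neg]; rw [← h6]; exact hnadj
        rw [hu2] at hx1
        rw [hxpt, this] at hx1
        linarith [hx1.2]
  by_cases hu : u ∈ S <;> by_cases hv : v ∈ S
  · -- both in S : not adjacent, and boxes must be separated somewhere
    have hnadj := hS u hu v hv
    simp only [hnadj, false_iff]
    intro hall
    obtain ⟨i, hi⟩ := key u hu
    obtain ⟨x, hx1, hx2⟩ := hall i
    simp only [hA, hB, if_pos hu, if_pos hv, Set.mem_Icc] at hx1 hx2
    have hxu : x = pt u i := le_antisymm hx1.2 hx1.1
    have hxv : x = pt v i := le_antisymm hx2.2 hx2.1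
    have hne : pt u i ≠ pt v i := by
      rcases hi with h5 | ⟨h6, h5⟩
      · have hv5 : v ≠ σ i := fun h => huv (h5.trans h.symm)
        simp only [hpt, if_pos h5, if_neg hv5]
        split_ifs <;> norm_num
      · have hv6 : v ≠ τ i := fun h => huv (h6.trans h.symm)
        simp only [hpt, if_neg h5, if_pos h6]
        split_ifs <;> norm_num
    exact hne (hxu ▸ hxv ▸ rfl)
  · -- u ∈ S, v ∉ S : symmetric to main
    have h := main v u hv hu (Ne.symm huv)
    rw [G.adj_comm]
    rw [h]
    constructor
    · intro h2 i; obtain ⟨x, hx1, hx2⟩ := h2 i; exact ⟨x, hx2, hx1⟩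
    · intro h2 i; obtain ⟨x, hx1, hx2⟩ := h2 i; exact ⟨x, hx2, hx1⟩
  · exact main u v hu hv huv
  · -- both in K : adjacent, and all intervals contain 0
    have hadj : G.Adj u v := hK (Finset.mem_coe.mpr (hmemK u hu))
      (Finset.mem_coe.mpr (hmemK v hv)) huv
    simp only [hadj, true_iff]
    intro i
    obtain ⟨h1, h2, _, _⟩ := hAle0 u i hu
    obtain ⟨h3, h4, _, _⟩ := hAle0 v i hv
    exact ⟨0, Set.mem_inter ⟨h1, h2⟩ ⟨h3, h4⟩⟩

lemma rep_K {V : Type*} [Fintype V] [DecidableEq V] (G : SimpleGraph V)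
    (K S : Finset V) (hdisj : Disjoint K S) (hunion : K ∪ S = Finset.univ)
    (hK : G.IsClique ↑K) (hS : ∀ u ∈ S, ∀ v ∈ S, ¬ G.Adj u v)
    (hKne : K.Nonempty) :
    HasBoxRep G ((K.card + 1) / 2) := by
  classical
  have hmemK : ∀ v : V, v ∉ S → v ∈ K := by
    intro v hv
    have : v ∈ K ∪ S := hunion ▸ Finset.mem_univ v
    simpa [Finset.mem_union, hv] using this
  have hKS : ∀ v : V, v ∈ K → v ∉ S := fun v hv hvS =>
    Finset.disjoint_left.mp hdisj hv hvS
  set c := K.card with hc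
  have hc1 : 1 ≤ c := Finset.card_pos.mpr hKne
  set e : ↥K ≃ Fin c := Fintype.equivFinOfCardEq (Fintype.card_coe K) with he
  set f : Fin c → V := fun j => ((e.symm j : ↥K) : V) with hf
  have hfK : ∀ j, f j ∈ K := fun j => (e.symm j).2
  have hfinj : Function.Injective f := fun j1 j2 h =>
    e.symm.injective (Subtype.ext h)
  have hidx : ∀ v (hv : v ∈ K), f (e ⟨v, hv⟩) = v := by
    intro v hv; simp [hf]
  set k := (c + 1) / 2 with hk
  have h2i : ∀ i : Fin k, 2 * (i : ℕ) < c := by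
    intro i; have := i.2; omega
  set α : Fin k → V := fun i => f ⟨2 * i, h2i i⟩ with hα
  set β : Fin k → V := fun i =>
    if h : 2 * (i : ℕ) + 1 < c then f ⟨2 * i + 1, h⟩ else α i with hβ
  have hαK : ∀ i, α i ∈ K := fun i => hfK _
  have hβK : ∀ i, β i ∈ K := by
    intro i; simp only [hβ]; split_ifs with h
    · exact hfK _
    · exact hαK i
  have key : ∀ v, v ∈ K → ∃ i : Fin k, v = α i ∨ (v = β i ∧ v ≠ α i) := by
    intro v hv
    set j : ℕ := (e ⟨v, hv⟩ : ℕ) with hj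
    have hjc : j < c := (e ⟨v, hv⟩).2
    refine ⟨⟨j / 2, by omega⟩, ?_⟩
    set iF : Fin k := ⟨j / 2, by omega⟩ with hiF
    have hαval : α iF = f ⟨2 * (j / 2), h2i iF⟩ := rfl
    by_cases hpar : 2 * (j / 2) = j
    · left
      rw [hαval, ← hidx v hv]
      exact (congrArg f (Fin.ext (by simpa using hpar))).symm
    · right
      have hodd : 2 * (j / 2) + 1 = j := by omega
      have hlt : 2 * (j / 2) + 1 < c := by omega
      have hβval : β iF = f ⟨2 * (j / 2) + 1, hlt⟩ := by
        simp only [hβ]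
        rw [dif_pos (show 2 * (iF : ℕ) + 1 < c from hlt)]
      constructor
      · rw [hβval, ← hidx v hv]
        exact (congrArg f (Fin.ext (by simpa using hodd))).symm
      · intro hvs
        rw [hαval, ← hidx v hv] at hvs
        have := hfinj hvs
        have : j = 2 * (j / 2) := by simpa [Fin.ext_iff] using this
        omega
  -- injective point placement in (0,1)
  have hVne : Nonempty V := ⟨hKne.choose⟩
  set n := Fintype.card V with hn
  have hn1 : 1 ≤ n := Fintype.card_pos
  set eV : V ≃ Fin n := Fintype.equivFin V with heV
  set x : V → ℝ := fun v => ((eV v : ℕ) + 1) / (n + 1) with hx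
  have hx0 : ∀ v, 0 < x v := by
    intro v; apply div_pos <;> positivity
  have hx1 : ∀ v, x v < 1 := by
    intro v
    rw [hx, div_lt_one (by positivity)]
    have : (eV v : ℕ) < n := (eV v).2
    push_cast
    exact_mod_cast by exact_mod_cast Nat.add_lt_add_right this 1
  have hxinj : Function.Injective x := by
    intro u v h
    simp only [hx] at h
    have hd : ((n:ℝ) + 1) ≠ 0 := by positivity
    have h2 : (((eV u : ℕ) : ℝ) + 1) = (((eV v : ℕ) : ℝ) + 1) := by
      have := congrArg (fun t : ℝ => t * ((n:ℝ) + 1)) h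
      simpa [div_mul_cancel₀, hd] using this
    have h3 : ((eV u : ℕ) : ℝ) = ((eV v : ℕ) : ℝ) := by linarith
    have : (eV u : ℕ) = (eV v : ℕ) := by exact_mod_cast h3
    exact eV.injective (Fin.ext this)
  set cls : V → Fin k → ℕ := fun v i =>
    if G.Adj (α i) v then (if G.Adj (β i) v then 1 else 0)
    else (if G.Adj (β i) v then 2 else 3) with hcls
  have hcls3 : ∀ v i, cls v i ≤ 3 := by
    intro v i; simp only [hcls]; split_ifs <;> omega
  set pt : V → Fin k → ℝ := fun v i => (cls v i : ℝ) + x v with hpt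
  set A : V → Fin k → ℝ := fun v i =>
    if v ∈ S then pt v i else if v = α i then 0 else if v = β i then 1 else 0 with hA
  set B : V → Fin k → ℝ := fun v i =>
    if v ∈ S then pt v i else if v = α i then 2 else if v = β i then 3 else 4 with hB
  have hK2 : ∀ v i, v ∉ S → A v i ≤ 2 ∧ 2 ≤ B v i := by
    intro v i hv
    simp only [hA, hB, if_neg hv]
    constructor
    · split_ifs <;> norm_num
    · split_ifs <;> norm_num
  refine ⟨A, B, ?_, ?_⟩
  · intro v i
    by_cases hv : v ∈ S
    · simp [hA, hB, hv]
    · obtain ⟨h1, h2⟩ := hK2 v i hv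
      linarith
  intro u v huv
  have main : ∀ u v : V, u ∉ S → v ∈ S → u ≠ v →
      (G.Adj u v ↔ ∀ i : Fin k,
        (Set.Icc (A u i) (B u i) ∩ Set.Icc (A v i) (B v i)).Nonempty) := by
    intro u v hu hv huv
    constructor
    · intro hadj i
      refine ⟨pt v i, ?_, ?_⟩
      · simp only [hA, hB, if_neg hu, Set.mem_Icc]
        have hxv0 := hx0 v
        have hxv1 := hx1 v
        by_cases h5 : u = α i
        · have hadjα : G.Adj (α i) v := h5 ▸ hadj
          have hcv : cls v i ≤ 1 := by
            simp only [hcls, if_pos hadjα]; split_ifs <;> omega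
          have hcv' : (cls v i : ℝ) ≤ 1 := by exact_mod_cast hcv
          rw [if_pos h5, if_pos h5]
          simp only [hpt]
          constructor <;> [positivity; linarith]
        · by_cases h6 : u = β i
          · have hadjβ : G.Adj (β i) v := h6 ▸ hadj
            have hcv : 1 ≤ cls v i ∧ cls v i ≤ 2 := by
              simp only [hcls, if_pos hadjβ]; split_ifs <;> omega
            have hcv1 : (1:ℝ) ≤ (cls v i : ℝ) := by exact_mod_cast hcv.1
            have hcv2 : (cls v i : ℝ) ≤ 2 := by exact_mod_cast hcv.2
            rw [if_neg h5, if_pos h6, if_neg h5, if_pos h6]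
            simp only [hpt]
            constructor <;> linarith
          · have hcv : (cls v i : ℝ) ≤ 3 := by exact_mod_cast hcls3 v i
            rw [if_neg h5, if_neg h6, if_neg h5, if_neg h6]
            simp only [hpt]
            constructor <;> [positivity; linarith]
      · simp only [hA, hB, if_pos hv, Set.mem_Icc]
        exact ⟨le_refl _, le_refl _⟩
    · intro hall
      by_contra hnadj
      obtain ⟨i, hi⟩ := key u (hmemK u hu)
      obtain ⟨y, hy1, hy2⟩ := hall i
      simp only [hA, hB, if_pos hv, Set.mem_Icc] at hy2
      have hypt : y = pt v i := le_antisymm hy2.2 hy2.1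
      simp only [hA, hB, if_neg hu, Set.mem_Icc] at hy1
      have hxv0 := hx0 v
      have hxv1 := hx1 v
      rcases hi with h5 | ⟨h6, h5⟩
      · have hnadjα : ¬ G.Adj (α i) v := by rw [← h5]; exact hnadj
        have hcv : 2 ≤ cls v i := by
          simp only [hcls, if_neg hnadjα]; split_ifs <;> omega
        have hcv' : (2:ℝ) ≤ (cls v i : ℝ) := by exact_mod_cast hcv
        rw [if_pos h5, if_pos h5] at hy1
        rw [hypt] at hy1
        simp only [hpt] at hy1
        linarith [hy1.2]
      · have hnadjβ : ¬ G.Adj (β i) v := by rw [← h6]; exact hnadj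
        have hcv : cls v i = 0 ∨ cls v i = 3 := by
          simp only [hcls, if_neg hnadjβ]
          split_ifs <;> simp
        rw [if_neg h5, if_pos h6, if_neg h5, if_pos h6] at hy1
        rw [hypt] at hy1
        simp only [hpt] at hy1
        rcases hcv with h | h <;> rw [h] at hy1 <;> push_cast at hy1 <;> linarith [hy1.1, hy1.2]
  by_cases hu : u ∈ S <;> by_cases hv : v ∈ S
  · -- both in S : not adjacent; points differ in coordinate 0
    have hnadj := hS u hu v hv
    simp only [hnadj, false_iff]
    intro hall
    have hk1 : 0 < k := by omega
    set i0 : Fin k := ⟨0, hk1⟩ with hi0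
    obtain ⟨y, hy1, hy2⟩ := hall i0
    simp only [hA, hB, if_pos hu, if_pos hv, Set.mem_Icc] at hy1 hy2
    have hyu : y = pt u i0 := le_antisymm hy1.2 hy1.1
    have hyv : y = pt v i0 := le_antisymm hy2.2 hy2.1
    have heqp : pt u i0 = pt v i0 := hyu ▸ hyv
    simp only [hpt] at heqp
    have hxu0 := hx0 u; have hxu1 := hx1 u
    have hxv0 := hx0 v; have hxv1 := hx1 v
    rcases lt_trichotomy (cls u i0) (cls v i0) with h | h | h
    · have : (cls u i0 : ℝ) + 1 ≤ (cls v i0 : ℝ) := by exact_mod_cast h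
      linarith
    · rw [h] at heqp
      have : x u = x v := by linarith
      exact huv (hxinj this)
    · have : (cls v i0 : ℝ) + 1 ≤ (cls u i0 : ℝ) := by exact_mod_cast h
      linarith
  · have h := main v u hv hu (Ne.symm huv)
    rw [G.adj_comm]
    rw [h]
    constructor
    · intro h2 i; obtain ⟨y, hy1, hy2⟩ := h2 i; exact ⟨y, hy2, hy1⟩
    · intro h2 i; obtain ⟨y, hy1, hy2⟩ := h2 i; exact ⟨y, hy2, hy1⟩
  · exact main u v hu hv huv
  · have hadj : G.Adj u v := hK (Finset.mem_coe.mpr (hmemK u hu))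
      (Finset.mem_coe.mpr (hmemK v hv)) huv
    simp only [hadj, true_iff]
    intro i
    obtain ⟨h1, h2⟩ := hK2 u i hu
    obtain ⟨h3, h4⟩ := hK2 v i hv
    exact ⟨2, Set.mem_inter ⟨h1, h2⟩ ⟨h3, h4⟩⟩

/-- For a split graph `G`, whose vertex set is partitioned into a nonempty clique `K`
and an independent set `S`, `box(G) ≤ min {⌈|K|/2⌉, ⌈|S|/2⌉}`. -/
theorem boxicity_splitGraph {V : Type*} [Fintype V] [DecidableEq V] (G : SimpleGraph V)
    (K S : Finset V) (hdisj : Disjoint K S) (hunion : K ∪ S = Finset.univ)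
    (hK : G.IsClique ↑K) (hS : ∀ u ∈ S, ∀ v ∈ S, ¬ G.Adj u v)
    (hKne : K.Nonempty) :
    boxicity G ≤ min ((K.card + 1) / 2) ((S.card + 1) / 2) := by
  have h1 : HasBoxRep G ((K.card + 1) / 2) := rep_K G K S hdisj hunion hK hS hKne
  have h2 : HasBoxRep G ((S.card + 1) / 2) := rep_S G K S hunion hK hS
  rcases min_cases ((K.card + 1) / 2) ((S.card + 1) / 2) with ⟨heq, _⟩ | ⟨heq, _⟩ <;>
    rw [heq]
  · exact Nat.sInf_le h1
  · exact Nat.sInf_le h2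
end

section
/- For every finite simple graph G on n vertices, box(G) ≤ ⌊n/2⌋. -/
private lemma icc_nonempty_iff (a b c d : ℝ) :
    (Set.Icc a b ∩ Set.Icc c d).Nonempty ↔ max a c ≤ min b d := by
  rw [Set.Icc_inter_Icc, Set.nonempty_Icc]

private lemma arctan_bds (t : ℝ) : -2 ≤ Real.arctan t ∧ Real.arctan t ≤ 2 := by
  have h1 := Real.arctan_lt_pi_div_two t
  have h2 := Real.neg_pi_div_two_lt_arctan t
  have h3 := Real.pi_le_four
  constructor <;> nlinarith

lemma hasBoxRep_extend {V : Type*} (G : SimpleGraph V) (u v : V) (huv : u ≠ v)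
    (hadj : ¬ G.Adj u v) (k : ℕ)
    (h : HasBoxRep (G.comap (Subtype.val : {x : V // x ≠ u ∧ x ≠ v} → V)) k) :
    HasBoxRep G (k + 1) := by
  classical
  obtain ⟨a', b', hle', hiff'⟩ := h
  let A : V → Fin (k+1) → ℝ := fun w => Fin.cons
    (if w = u then (-2:ℝ) else if w = v then 5 else if G.Adj u w then -2 else 0)
    (fun i => if h : w ≠ u ∧ w ≠ v then Real.arctan (a' ⟨w, h⟩ i) else -2)
  let B : V → Fin (k+1) → ℝ := fun w => Fin.cons
    (if w = u then (-1:ℝ) else if w = v then 6 else if G.Adj v w then 6 else 4)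
    (fun i => if h : w ≠ u ∧ w ≠ v then Real.arctan (b' ⟨w, h⟩ i) else 2)
  have hAB : ∀ w i, A w i ≤ B w i := by
    intro w i
    refine Fin.cases ?_ ?_ i
    · simp only [A, B, Fin.cons_zero]
      split_ifs <;> norm_num
    · intro j
      simp only [A, B, Fin.cons_succ]
      split_ifs with hw
      · exact Real.arctan_strictMono.monotone (hle' _ _)
      · norm_num
  let F : V → V → Prop := fun x y =>
    ∀ i, (Set.Icc (A x i) (B x i) ∩ Set.Icc (A y i) (B y i)).Nonempty
  have Fsymm : ∀ x y, F x y ↔ F y x := by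
    intro x y
    constructor <;> intro h i <;> rw [Set.inter_comm] <;> exact h i
  have huvcase : ¬ F u v := by
    intro hF
    have := hF 0
    simp only [A, B, Fin.cons_zero, icc_nonempty_iff, max_le_iff, le_min_iff, if_pos rfl,
      if_neg (Ne.symm huv), ite_true, if_true] at this
    norm_num at this
  have huScase : ∀ y, y ≠ u → y ≠ v → (G.Adj u y ↔ F u y) := by
    intro y hyu hyv
    simp only [F, A, B, Fin.forall_fin_succ, Fin.cons_zero, Fin.cons_succ, icc_nonempty_iff,
      max_le_iff, le_min_iff, if_pos rfl, if_neg hyu, if_neg hyv, if_neg huv, ite_true, if_true,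
      dif_neg (fun hc : u ≠ u ∧ u ≠ v => hc.1 rfl), dif_pos (⟨hyu, hyv⟩ : y ≠ u ∧ y ≠ v)]
    constructor
    · intro hAd
      refine ⟨⟨⟨by norm_num, by rw [if_pos hAd]; norm_num⟩, by split_ifs <;> norm_num,
        by split_ifs <;> norm_num⟩, fun j => ?_⟩
      exact ⟨⟨by norm_num, (arctan_bds _).2⟩, (arctan_bds _).1,
        Real.arctan_strictMono.monotone (hle' _ _)⟩
    · rintro ⟨⟨⟨-, h1⟩, -⟩, -⟩
      by_contra hAd
      rw [if_neg hAd] at h1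
      norm_num at h1
  have hvScase : ∀ y, y ≠ u → y ≠ v → (G.Adj v y ↔ F v y) := by
    intro y hyu hyv
    simp only [F, A, B, Fin.forall_fin_succ, Fin.cons_zero, Fin.cons_succ, icc_nonempty_iff,
      max_le_iff, le_min_iff, if_pos rfl, if_neg hyu, if_neg hyv, if_neg (Ne.symm huv),
      ite_true, if_true,
      dif_neg (fun hc : v ≠ u ∧ v ≠ v => hc.2 rfl), dif_pos (⟨hyu, hyv⟩ : y ≠ u ∧ y ≠ v)]
    constructor
    · intro hAd
      refine ⟨⟨⟨by norm_num, by split_ifs <;> norm_num⟩, by rw [if_pos hAd]; norm_num,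
        by split_ifs <;> norm_num⟩, fun j => ?_⟩
      exact ⟨⟨by norm_num, (arctan_bds _).2⟩, (arctan_bds _).1,
        Real.arctan_strictMono.monotone (hle' _ _)⟩
    · rintro ⟨⟨⟨-, -⟩, h1, -⟩, -⟩
      by_contra hAd
      rw [if_neg hAd] at h1
      norm_num at h1
  have hSScase : ∀ x y, x ≠ u → x ≠ v → y ≠ u → y ≠ v → x ≠ y → (G.Adj x y ↔ F x y) := by
    intro x y hxu hxv hyu hyv hxy
    have h' := hiff' ⟨x, hxu, hxv⟩ ⟨y, hyu, hyv⟩ (by simp [Subtype.ext_iff, hxy])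
    simp only [icc_nonempty_iff, max_le_iff, le_min_iff, SimpleGraph.comap_adj] at h'
    simp only [F, A, B, Fin.forall_fin_succ, Fin.cons_zero, Fin.cons_succ, icc_nonempty_iff,
      max_le_iff, le_min_iff, if_neg hxu, if_neg hxv, if_neg hyu, if_neg hyv, ite_true, if_true,
      dif_pos (⟨hxu, hxv⟩ : x ≠ u ∧ x ≠ v), dif_pos (⟨hyu, hyv⟩ : y ≠ u ∧ y ≠ v),
      Real.arctan_strictMono.le_iff_le]
    rw [h']
    constructor
    · intro hc
      exact ⟨⟨⟨by split_ifs <;> norm_num, by split_ifs <;> norm_num⟩,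
        by split_ifs <;> norm_num, by split_ifs <;> norm_num⟩, hc⟩
    · exact fun hh => hh.2
  refine ⟨A, B, hAB, fun x y hxy => ?_⟩
  show G.Adj x y ↔ F x y
  rcases eq_or_ne x u with rfl | hxu
  · rcases eq_or_ne y v with rfl | hyv
    · exact iff_of_false hadj huvcase
    · exact huScase y (Ne.symm hxy) hyv
  · rcases eq_or_ne x v with rfl | hxv
    · rcases eq_or_ne y u with rfl | hyu
      · rw [G.adj_comm, Fsymm]
        exact iff_of_false hadj huvcase
      · exact hvScase y hyu (Ne.symm hxy)
    · rcases eq_or_ne y u with rfl | hyu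
      · rw [G.adj_comm, Fsymm]
        exact huScase x hxu hxv
      · rcases eq_or_ne y v with rfl | hyv
        · rw [G.adj_comm, Fsymm]
          exact hvScase x hxu hxv
        · exact hSScase x y hxu hxv hyu hyv hxy

lemma hasBoxRep_complete {V : Type*} (G : SimpleGraph V)
    (hc : ∀ x y : V, x ≠ y → G.Adj x y) (k : ℕ) : HasBoxRep G k := by
  refine ⟨fun _ _ => 0, fun _ _ => 1, fun _ _ => zero_le_one, fun x y hxy => ?_⟩
  refine iff_of_true (hc x y hxy) fun i => ⟨0, ?_⟩
  simp [Set.mem_Icc]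

universe u

lemma hasBoxRep_main : ∀ (n : ℕ) (V : Type u) [Fintype V] (G : SimpleGraph V),
    Fintype.card V = n → HasBoxRep G (n / 2) := by
  intro n
  induction n using Nat.strong_induction_on with
  | _ n ih =>
    intro V _ G hV
    classical
    by_cases hc : ∀ x y : V, x ≠ y → G.Adj x y
    · exact hasBoxRep_complete G hc _
    · push_neg at hc
      obtain ⟨x, y, hxy, hadj⟩ := hc
      have hn2 : 2 ≤ n := by
        rw [← hV]
        haveI : Nontrivial V := ⟨x, y, hxy⟩
        exact Fintype.one_lt_card
      have hcard : Fintype.card {w : V // w ≠ x ∧ w ≠ y} = n - 2 := by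
        rw [Fintype.card_subtype]
        rw [show (Finset.univ.filter fun w : V => w ≠ x ∧ w ≠ y) = Finset.univ \ {x, y} by
          ext w; simp]
        rw [Finset.card_sdiff_of_subset (by simp)]
        rw [Finset.card_pair hxy]
        simp [hV]
      have hrep := ih (n - 2) (by omega) _
        (G.comap (Subtype.val : {w : V // w ≠ x ∧ w ≠ y} → V)) hcard
      have hext := hasBoxRep_extend G x y hxy hadj ((n - 2) / 2) hrep
      have heq : (n - 2) / 2 + 1 = n / 2 := by omega
      rwa [heq] at hext


/-- Every graph on `n` vertices has boxicity at most `⌊n/2⌋`. -/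
theorem boxicity_le_half {V : Type*} [Fintype V] (G : SimpleGraph V) :
    boxicity G ≤ Fintype.card V / 2 :=
  Nat.sInf_le (hasBoxRep_main (Fintype.card V) V G rfl)
end

section
/- For every m ≥ 1, the Roberts graph R_m on 2m vertices satisfies box(R_m) = m. -/
/-- The Roberts graph (cocktail party graph) on `2m` vertices: vertices `(i, s)`
with `i : Fin m`, `s : Fin 2`; two distinct vertices `(i, s)` and `(j, t)` are
adjacent iff `i ≠ j`. -/
def robertsGraph (m : ℕ) : SimpleGraph (Fin m × Fin 2) :=
  SimpleGraph.fromRel (fun p q => p.1 ≠ q.1)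

lemma icc_inter_nonempty {a b c d : ℝ} (h1 : a ≤ b) (h2 : c ≤ d) :
    (Set.Icc a b ∩ Set.Icc c d).Nonempty ↔ a ≤ d ∧ c ≤ b := by
  rw [Set.Icc_inter_Icc, Set.nonempty_Icc, sup_le_iff, le_inf_iff, le_inf_iff]
  constructor
  · rintro ⟨⟨_, h3⟩, h4, _⟩; exact ⟨h3, h4⟩
  · rintro ⟨h3, h4⟩; exact ⟨⟨h1, h3⟩, h4, h2⟩

lemma roberts_adj {m : ℕ} {u v : Fin m × Fin 2} :
    (robertsGraph m).Adj u v ↔ u ≠ v ∧ u.1 ≠ v.1 := by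
  simp only [robertsGraph, SimpleGraph.fromRel_adj]
  tauto

lemma roberts_hasBoxRep (m : ℕ) : HasBoxRep (robertsGraph m) m := by
  refine ⟨fun p j => if j = p.1 then ((p.2 : ℕ) : ℝ) else 0,
         fun p j => if j = p.1 then ((p.2 : ℕ) : ℝ) else 1, ?_, ?_⟩
  · intro v i
    by_cases h : i = v.1 <;> simp [h]
  · intro u v huv
    rw [roberts_adj]
    constructor
    · rintro ⟨-, h1⟩ i
      rw [icc_inter_nonempty (by by_cases h : i = u.1 <;> simp [h])
        (by by_cases h : i = v.1 <;> simp [h])]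
      have hu1 : ((u.2 : ℕ) : ℝ) ≤ 1 := by
        have := u.2.is_le; exact_mod_cast this
      have hv1 : ((v.2 : ℕ) : ℝ) ≤ 1 := by
        have := v.2.is_le; exact_mod_cast this
      by_cases h : i = u.1
      · have h' : i ≠ v.1 := by rw [h]; exact h1
        simp [h, h', h1, hu1, Nat.cast_nonneg]
      · by_cases h' : i = v.1 <;> simp [h, h', h1, Ne.symm h1, hv1, Nat.cast_nonneg]
    · intro h
      refine ⟨huv, ?_⟩
      intro heq
      have := h u.1
      rw [icc_inter_nonempty (by simp) (by simp [← heq])] at this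
      simp only [if_pos rfl, ← heq, if_pos rfl] at this
      have h2 : u.2 = v.2 := by
        have := le_antisymm this.1 this.2
        exact Fin.ext (by exact_mod_cast this)
      exact huv (Prod.ext heq h2)

lemma roberts_not_hasBoxRep (m k : ℕ) (hk : k < m) : ¬ HasBoxRep (robertsGraph m) k := by
  rintro ⟨a, b, hab, hadj⟩
  -- for each i, the pair (i,0),(i,1) is non-adjacent: find a coordinate of disjointness
  have key : ∀ i : Fin m, ∃ j : Fin k,
      ¬ (a (i,0) j ≤ b (i,1) j ∧ a (i,1) j ≤ b (i,0) j) := by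
    intro i
    have hne : ((i, (0:Fin 2)) : Fin m × Fin 2) ≠ (i, 1) := by simp
    have hnadj : ¬ (robertsGraph m).Adj (i,0) (i,1) := by
      rw [roberts_adj]; simp
    rw [hadj _ _ hne] at hnadj
    push_neg at hnadj
    obtain ⟨j, hj⟩ := hnadj
    refine ⟨j, fun hcon => ?_⟩
    have h2 := (icc_inter_nonempty (hab _ _) (hab _ _)).mpr hcon
    rw [hj] at h2
    exact Set.not_nonempty_empty h2
  choose c hc using key
  have : ¬ Function.Injective c := by
    intro hinj
    have := Fintype.card_le_of_injective c hinj
    simp at this; omega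
  rw [Function.not_injective_iff] at this
  obtain ⟨i, i', hii', hne⟩ := this
  set j := c i with hj
  -- cross adjacencies
  have cross : ∀ s t : Fin 2, a (i,s) j ≤ b (i',t) j ∧ a (i',t) j ≤ b (i,s) j := by
    intro s t
    have hne2 : ((i,s) : Fin m × Fin 2) ≠ (i',t) := by
      intro h; exact hne (congrArg Prod.fst h)
    have hadj2 : (robertsGraph m).Adj (i,s) (i',t) := by
      rw [roberts_adj]; exact ⟨hne2, hne⟩
    have := (hadj _ _ hne2).mp hadj2 j
    rwa [icc_inter_nonempty (hab _ _) (hab _ _)] at this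
  have d1 := hc i
  have d2 := hc i'
  rw [← hj] at d1
  rw [← hii'] at d2
  push_neg at d1 d2
  have c00 := cross 0 0
  have c01 := cross 0 1
  have c10 := cross 1 0
  have c11 := cross 1 1
  have hab0 := hab (i,0) j
  have hab1 := hab (i,1) j
  have hab0' := hab (i',0) j
  have hab1' := hab (i',1) j
  rcases le_or_gt (a (i,0) j) (b (i,1) j) with h1 | h1
  · have h2 := d1 h1  -- b (i,0) j < a (i,1) j
    rcases le_or_gt (a (i',0) j) (b (i',1) j) with h3 | h3
    · have h4 := d2 h3
      linarith [c00.1, c00.2, c01.1, c01.2, c10.1, c10.2, c11.1, c11.2]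
    · linarith [c00.1, c00.2, c01.1, c01.2, c10.1, c10.2, c11.1, c11.2]
  · rcases le_or_gt (a (i',0) j) (b (i',1) j) with h3 | h3
    · have h4 := d2 h3
      linarith [c00.1, c00.2, c01.1, c01.2, c10.1, c10.2, c11.1, c11.2]
    · linarith [c00.1, c00.2, c01.1, c01.2, c10.1, c10.2, c11.1, c11.2]

/-- The Roberts graph on `2m` vertices has boxicity exactly `m`. -/
theorem boxicity_robertsGraph (m : ℕ) (hm : 1 ≤ m) :
    boxicity (robertsGraph m) = m := by
  have hmem : m ∈ {k : ℕ | HasBoxRep (robertsGraph m) k} := roberts_hasBoxRep m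
  have hle : boxicity (robertsGraph m) ≤ m := Nat.sInf_le hmem
  have hsinf : boxicity (robertsGraph m) ∈ {k : ℕ | HasBoxRep (robertsGraph m) k} :=
    Nat.sInf_mem ⟨m, hmem⟩
  rcases lt_or_ge (boxicity (robertsGraph m)) m with h | h
  · exact absurd hsinf (roberts_not_hasBoxRep m _ h)
  · exact le_antisymm hle h
end
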